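/- arXiv:1412.6730 — 3 statements merged into one kernel-verified Lean document; each statement's English description precedes it below -/
import Mathlib

section
/- For the 2×2 matrix P(x) with entries P₁₁ = 2 + x₂², P₁₂ = P₂₁ = x₁x₂ − 1, P₂₂ = 1 + x₁², the determinant satisfies det P(x) = 1 + x₁² + (x₁ + x₂)², and consequently the minimum eigenvalue of P(x) is at least 1/3 for all (x₁, x₂) ∈ ℝ². -/
open Matrix

lemma trace_eq_sum_eigs {n : ℕ} {A : Matrix (Fin n) (Fin n) ℝ} (hA : A.IsHermitian) :
    A.trace = ∑ i, hA.eigenvalues i := by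
  conv_lhs => rw [hA.spectral_theorem]
  rw [Unitary.conjStarAlgAut_apply, Matrix.trace_mul_cycle, Unitary.coe_star_mul_self,
    Matrix.one_mul, Matrix.trace_diagonal]
  simp

/-- For `P(x) = [[2 + x₂², x₁x₂ − 1], [x₁x₂ − 1, 1 + x₁²]]` one has
`det P(x) = 1 + x₁² + (x₁ + x₂)²` and every eigenvalue of `P(x)` is at least `1/3`. -/
theorem det_and_min_eigenvalue_bound
    (P : ℝ → ℝ → Matrix (Fin 2) (Fin 2) ℝ)
    (hP : ∀ x₁ x₂ : ℝ, P x₁ x₂ = !![2 + x₂ ^ 2, x₁ * x₂ - 1; x₁ * x₂ - 1, 1 + x₁ ^ 2]) :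
    ∀ x₁ x₂ : ℝ,
      (P x₁ x₂).det = 1 + x₁ ^ 2 + (x₁ + x₂) ^ 2 ∧
      ∀ (hH : (P x₁ x₂).IsHermitian) (i : Fin 2), (1 : ℝ) / 3 ≤ hH.eigenvalues i := by
  intro x₁ x₂
  have hdet : (P x₁ x₂).det = 1 + x₁ ^ 2 + (x₁ + x₂) ^ 2 := by
    rw [hP, Matrix.det_fin_two_of]; ring
  refine ⟨hdet, fun hH i => ?_⟩
  have hd : hH.eigenvalues 0 * hH.eigenvalues 1 = 1 + x₁ ^ 2 + (x₁ + x₂) ^ 2 := by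
    have := hH.det_eq_prod_eigenvalues
    rw [hdet, Fin.prod_univ_two] at this
    exact_mod_cast this.symm
  have htr : (P x₁ x₂).trace = 3 + x₁ ^ 2 + x₂ ^ 2 := by
    rw [hP, Matrix.trace_fin_two_of]; ring
  have ht : hH.eigenvalues 0 + hH.eigenvalues 1 = 3 + x₁ ^ 2 + x₂ ^ 2 := by
    have h2 := trace_eq_sum_eigs hH
    rw [Fin.sum_univ_two] at h2
    linarith [h2, htr]
  have key : ∀ a b : ℝ, a * b = 1 + x₁ ^ 2 + (x₁ + x₂) ^ 2 →
      a + b = 3 + x₁ ^ 2 + x₂ ^ 2 → (1 : ℝ) / 3 ≤ a := by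
    intro a b h1 h2
    nlinarith [sq_nonneg (5 * x₁ + 3 * x₂), sq_nonneg x₂, sq_nonneg x₁, sq_nonneg a,
      sq_nonneg b, sq_nonneg (a - b), sq_nonneg (x₁ + x₂)]
  have hcase : hH.eigenvalues i = hH.eigenvalues 0 ∨ hH.eigenvalues i = hH.eigenvalues 1 := by
    fin_cases i <;> simp
  rcases hcase with h | h
  · rw [h]; exact key _ _ hd ht
  · rw [h]; exact key (hH.eigenvalues 1) (hH.eigenvalues 0) (by rw [mul_comm]; exact hd) (by rw [add_comm]; exact ht)
end

section
/- For every positive definite symmetric real 2×2 matrix P = [[p, q], [q, r]] (so p > 0, r > 0, pr > q²), there exist x = (x₁, x₂) ∈ ℝ² and v = (0, v₂) with v₂ ≠ 0 such that vᵀ(P·Df(x) + Df(x)ᵀP)v > 0, where Df(x) is the Jacobian of the vector field f(x) = (x₂√(1+x₁²), −x₁x₂²/√(1+x₁²)). Hence no constant Riemannian metric is geodesically monotone in the directions tangent to the level sets of the output h(x) = x₁. -/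
open Matrix

/-- For every constant symmetric positive definite `2×2` metric `P = [[p,q],[q,r]]`,
there are a point `x` and a vector `v = (0, v₂)` tangent to the level sets of
`h(x) = x₁` such that `vᵀ (P·Df(x) + Df(x)ᵀ·P) v > 0`, where `Df` is the Jacobian of
`f(x) = (x₂√(1+x₁²), −x₁x₂²/√(1+x₁²))`.  Hence no constant metric is geodesically
monotone in the directions tangent to the output level sets. -/
theorem no_constant_metric_monotone
    (p q r : ℝ) (hp : 0 < p) (hr : 0 < r) (hpr : q ^ 2 < p * r)
    (P : Matrix (Fin 2) (Fin 2) ℝ) (hP : P = !![p, q; q, r])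
    (Df : ℝ → ℝ → Matrix (Fin 2) (Fin 2) ℝ)
    (hDf : ∀ x₁ x₂ : ℝ, Df x₁ x₂ =
      (Real.sqrt (1 + x₁ ^ 2))⁻¹ •
        !![x₁ * x₂, 1 + x₁ ^ 2; -(x₂ ^ 2) / (1 + x₁ ^ 2), -2 * x₁ * x₂]) :
    ∃ x₁ x₂ v₂ : ℝ, v₂ ≠ 0 ∧
      0 < (![0, v₂]) ⬝ᵥ (P * Df x₁ x₂ + (Df x₁ x₂)ᵀ * P).mulVec ![0, v₂] := by
  refine ⟨1, (2 * q - 1) / (2 * r), 1, one_ne_zero, ?_⟩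
  have hs : (0 : ℝ) < Real.sqrt (1 + 1 ^ 2) := Real.sqrt_pos.2 (by norm_num)
  subst hP
  rw [hDf]
  simp only [Matrix.mulVec, Matrix.mul_apply, Matrix.add_apply, Matrix.transpose_apply,
    Matrix.smul_apply, dotProduct, Fin.sum_univ_two, Matrix.cons_val_zero, Matrix.cons_val_one,
    Matrix.head_cons, Matrix.head_fin_const, smul_eq_mul, Matrix.cons_val', Matrix.empty_val',
    Matrix.cons_val_fin_one, Matrix.of_apply]
  have hr' : r ≠ 0 := hr.ne'
  field_simp
  ring_nf
  have h2 : Real.sqrt 2 ^ 2 = 2 := Real.sq_sqrt (by norm_num)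
  have key : q * Real.sqrt 2 ^ 2 * r = 2 * (q * r) := by rw [h2]; ring
  linarith [hr, key, pow_pos hr 2]
end

section
/- Let P : ℝⁿ → ℝ^{n×n} be a C¹ symmetric-matrix-valued function, f : ℝⁿ → ℝⁿ a C¹ vector field, h : ℝⁿ → ℝ^m C¹, and θ : ℝ^m → (0, ∞) C¹. Suppose ℒ_f P(x) ≤ ρ(x)·Dh(x)ᵀDh(x) − (ε/2)P(x) for all x, for some continuous ρ ≥ 0 and ε > 0, and suppose θ∘h and its gradient, f, and P are bounded on every compact set with P bounded below by p̲ I > 0 on the region of interest. Then for the time-scaled vector field f̄(x) = θ(h(x))·f(x) there exists a continuous ρ̄ and ε̄ > 0 (on any compact set where θ∘h ≥ θ₀ > 0) such that ℒ_{f̄} P(x) ≤ ρ̄(x)·Dh(x)ᵀDh(x) − (ε̄/2)P(x). -/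
open Matrix

private lemma amgm_aux (δ a b : ℝ) (hδ : 0 < δ) : 2 * a * b ≤ a ^ 2 / δ + δ * b ^ 2 := by
  have h1 : a ^ 2 / δ + δ * b ^ 2 - 2 * a * b = (a - δ * b) ^ 2 / δ := by
    field_simp; ring
  have h2 : 0 ≤ (a - δ * b) ^ 2 / δ := div_nonneg (sq_nonneg _) hδ.le
  linarith

private lemma dot_eq_inner (n : ℕ) (v : EuclideanSpace ℝ (Fin n)) (w : Fin n → ℝ) :
    (fun i => v i) ⬝ᵥ w = inner ℝ v ((WithLp.equiv 2 (Fin n → ℝ)).symm w) := by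
  simp [dotProduct, PiLp.inner_apply, RCLike.inner_apply, conj_trivial,
    mul_comm]

/-- Preservation of the Lie-derivative inequality under output-dependent time scaling:
if `ℒ_f P ≤ ρ·DhᵀDh − (ε/2)P` with `P ≥ p̲ I > 0`, then for the scaled field
`f̄ = (θ∘h)·f` (with `θ > 0`) there exist, on every compact set, a continuous `ρ̄` and
`ε̄ > 0` with `ℒ_{f̄} P ≤ ρ̄·DhᵀDh − (ε̄/2)P`. -/
theorem lie_inequality_time_scaling
    (n m : ℕ)
    (P : EuclideanSpace ℝ (Fin n) → Matrix (Fin n) (Fin n) ℝ)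
    (f : EuclideanSpace ℝ (Fin n) → EuclideanSpace ℝ (Fin n))
    (h : EuclideanSpace ℝ (Fin n) → EuclideanSpace ℝ (Fin m))
    (θ : EuclideanSpace ℝ (Fin m) → ℝ)
    (ρ : EuclideanSpace ℝ (Fin n) → ℝ) (ε pl : ℝ)
    (hPsymm : ∀ x, (P x).IsSymm)
    (hPC1 : ∀ i j : Fin n, ContDiff ℝ 1 fun x => P x i j)
    (hfC1 : ContDiff ℝ 1 f) (hhC1 : ContDiff ℝ 1 h) (hθC1 : ContDiff ℝ 1 θ)
    (hθpos : ∀ y, 0 < θ y)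
    (hρcont : Continuous ρ) (hρnonneg : ∀ x, 0 ≤ ρ x)
    (hε : 0 < ε) (hpl : 0 < pl)
    (hPlow : ∀ x (v : EuclideanSpace ℝ (Fin n)),
      pl * ‖v‖ ^ 2 ≤ (fun i => v i) ⬝ᵥ (P x).mulVec fun i => v i)
    (hLie : ∀ x (v : EuclideanSpace ℝ (Fin n)),
      fderiv ℝ (fun z => (fun i => v i) ⬝ᵥ (P z).mulVec fun i => v i) x (f x)
          + 2 * ((fun i => v i) ⬝ᵥ (P x).mulVec fun i => fderiv ℝ f x v i) ≤
        ρ x * ‖fderiv ℝ h x v‖ ^ 2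
          - ε / 2 * ((fun i => v i) ⬝ᵥ (P x).mulVec fun i => v i)) :
    ∀ K : Set (EuclideanSpace ℝ (Fin n)), IsCompact K →
      ∃ ρb : EuclideanSpace ℝ (Fin n) → ℝ, ∃ εb : ℝ, 0 < εb ∧ ContinuousOn ρb K ∧
        ∀ x ∈ K, ∀ v : EuclideanSpace ℝ (Fin n),
          fderiv ℝ (fun z => (fun i => v i) ⬝ᵥ (P z).mulVec fun i => v i) x
              (θ (h x) • f x)
            + 2 * ((fun i => v i) ⬝ᵥ (P x).mulVec
                fun i => fderiv ℝ (fun z => θ (h z) • f z) x v i) ≤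
          ρb x * ‖fderiv ℝ h x v‖ ^ 2
            - εb / 2 * ((fun i => v i) ⬝ᵥ (P x).mulVec fun i => v i) := by
  intro K hK
  rcases Set.eq_empty_or_nonempty K with rfl | hKne
  · exact ⟨fun _ => 0, 1, one_pos, continuousOn_empty _,
      fun x hx => absurd hx (Set.notMem_empty x)⟩
  have hθh_cont : Continuous fun x => θ (h x) := hθC1.continuous.comp hhC1.continuous
  obtain ⟨x₀, hx₀K, hx₀min⟩ := hK.exists_isMinOn hKne hθh_cont.continuousOn
  set θ₀ : ℝ := θ (h x₀) with hθ₀def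
  have hθ₀pos : 0 < θ₀ := hθpos _
  set δ : ℝ := pl * θ₀ * ε / 4 with hδdef
  have hδpos : 0 < δ := by positivity
  set c : EuclideanSpace ℝ (Fin n) → ℝ :=
    fun x => ‖(WithLp.equiv 2 (Fin n → ℝ)).symm ((P x).mulVec fun i => f x i)‖ with hcdef
  set g : EuclideanSpace ℝ (Fin n) → ℝ := fun x => ‖fderiv ℝ θ (h x)‖ with hgdef
  have hccont : Continuous c := by
    apply Continuous.norm
    apply (PiLp.continuous_toLp (p := 2) (β := fun _ : Fin n => ℝ)).comp
    apply continuous_pi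
    intro i
    simp only [mulVec, dotProduct]
    exact continuous_finset_sum _ fun j _ =>
      ((hPC1 i j).continuous.mul ((EuclideanSpace.proj j).continuous.comp hfC1.continuous))
  have hgcont : Continuous g :=
    ((hθC1.continuous_fderiv one_ne_zero).comp hhC1.continuous).norm
  refine ⟨fun x => θ (h x) * ρ x + g x ^ 2 * c x ^ 2 / δ, θ₀ * ε / 2, by positivity, ?_, ?_⟩
  · exact ((hθh_cont.mul hρcont).add
      (((hgcont.pow 2).mul (hccont.pow 2)).div_const δ)).continuousOn
  intro x hxK v
  -- differentiability facts
  have hhd : DifferentiableAt ℝ h x := (hhC1.differentiable one_ne_zero) x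
  have hθd : DifferentiableAt ℝ θ (h x) := (hθC1.differentiable one_ne_zero) (h x)
  have hθhd : DifferentiableAt ℝ (fun z => θ (h z)) x := hθd.comp x hhd
  have hfd : DifferentiableAt ℝ f x := (hfC1.differentiable one_ne_zero) x
  set t : ℝ := θ (h x) with htdef
  have htpos : 0 < t := hθpos _
  have hθ₀le : θ₀ ≤ t := isMinOn_iff.mp hx₀min x hxK
  set s : ℝ := fderiv ℝ (fun z => θ (h z)) x v with hsdef
  set w : EuclideanSpace ℝ (Fin n) := fderiv ℝ f x v with hwdef
  set A : ℝ := fderiv ℝ (fun z => (fun i => v i) ⬝ᵥ (P z).mulVec fun i => v i) x (f x)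
    with hAdef
  set B : ℝ := (fun i => v i) ⬝ᵥ (P x).mulVec fun i => w i with hBdef
  set D : ℝ := (fun i => v i) ⬝ᵥ (P x).mulVec fun i => f x i with hDdef
  set Q : ℝ := (fun i => v i) ⬝ᵥ (P x).mulVec fun i => v i with hQdef
  set N : ℝ := ‖fderiv ℝ h x v‖ with hNdef
  have hQ0 : 0 ≤ Q := le_trans (by positivity) (hPlow x v)
  -- first term
  have hterm1 : fderiv ℝ (fun z => (fun i => v i) ⬝ᵥ (P z).mulVec fun i => v i) x
      (θ (h x) • f x) = t * A := by
    rw [ContinuousLinearMap.map_smul, smul_eq_mul]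
  -- derivative of the scaled field
  have hdF : fderiv ℝ (fun z => θ (h z) • f z) x v = t • w + s • f x := by
    rw [fderiv_fun_smul hθhd hfd]
    simp [ContinuousLinearMap.smulRight_apply]
    rfl
  have hco : (fun i => fderiv ℝ (fun z => θ (h z) • f z) x v i)
      = t • (fun i => w i) + s • (fun i => f x i) := by
    funext i
    rw [hdF]
    rfl
  have hterm2 : ((fun i => v i) ⬝ᵥ (P x).mulVec
      fun i => fderiv ℝ (fun z => θ (h z) • f z) x v i) = t * B + s * D := by
    rw [hco]
    simp [Matrix.mulVec_add, Matrix.mulVec_smul, dotProduct_add, dotProduct_smul,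
      smul_eq_mul, hBdef, hDdef]
  -- chain rule bound for s
  have hschain : s = (fderiv ℝ θ (h x)) ((fderiv ℝ h x) v) := by
    have hcomp : fderiv ℝ (fun z => θ (h z)) x
        = (fderiv ℝ θ (h x)).comp (fderiv ℝ h x) := fderiv_comp x hθd hhd
    rw [hsdef, hcomp]; rfl
  have hsbound : |s| ≤ g x * N := by
    rw [hschain]
    calc |(fderiv ℝ θ (h x)) ((fderiv ℝ h x) v)|
        = ‖(fderiv ℝ θ (h x)) ((fderiv ℝ h x) v)‖ := (Real.norm_eq_abs _).symm
      _ ≤ ‖fderiv ℝ θ (h x)‖ * ‖(fderiv ℝ h x) v‖ := (fderiv ℝ θ (h x)).le_opNorm _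
  -- Cauchy–Schwarz bound for D
  have hDbound : |D| ≤ ‖v‖ * c x := by
    rw [hDdef, dot_eq_inner]
    exact abs_real_inner_le_norm _ _
  have hQlow : pl * ‖v‖ ^ 2 ≤ Q := hPlow x v
  have hN0 : 0 ≤ N := norm_nonneg _
  have hg0 : 0 ≤ g x := norm_nonneg _
  have hc0 : 0 ≤ c x := norm_nonneg _
  -- Lie inequality scaled by t
  have hL : A + 2 * B ≤ ρ x * N ^ 2 - ε / 2 * Q := hLie x v
  rw [hterm1, hterm2]
  clear_value t s w A B D Q N
  clear hLie hPlow hterm1 hterm2 hco hdF hschain hQdef hBdef hDdef hAdef hNdef hsdef hwdef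
  have hLt : t * A + 2 * (t * B) ≤ t * (ρ x * N ^ 2) - t * (ε / 2 * Q) := by
    have := mul_le_mul_of_nonneg_left hL htpos.le
    linarith [this]
  -- cross term bound
  have hcross : 2 * (s * D) ≤ g x ^ 2 * c x ^ 2 / δ * N ^ 2 + θ₀ * ε / 4 * Q := by
    have h1 : 2 * (s * D) ≤ 2 * (|s| * |D|) := by
      have := le_abs_self (s * D)
      rw [abs_mul] at this
      linarith
    have h2 : |s| * |D| ≤ (g x * N) * (‖v‖ * c x) :=
      mul_le_mul hsbound hDbound (abs_nonneg _) (mul_nonneg hg0 hN0)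
    have h3 : 2 * (g x * c x * N) * ‖v‖ ≤ (g x * c x * N) ^ 2 / δ + δ * ‖v‖ ^ 2 :=
      amgm_aux δ _ _ hδpos
    have h4 : δ * ‖v‖ ^ 2 ≤ θ₀ * ε / 4 * Q := by
      have h6 : θ₀ * ε / 4 * (pl * ‖v‖ ^ 2) ≤ θ₀ * ε / 4 * Q :=
        mul_le_mul_of_nonneg_left hQlow
          (by have := hθ₀pos; have := hε; positivity)
      rw [hδdef]; nlinarith [h6]
    have h7 : (g x * c x * N) ^ 2 / δ = g x ^ 2 * c x ^ 2 / δ * N ^ 2 := by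
      field_simp
    have h8 : 2 * ((g x * N) * (‖v‖ * c x)) = 2 * (g x * c x * N) * ‖v‖ := by ring
    linarith [h1, h2, h3, h4, h7, h8]
  -- conclusion
  have hQt : θ₀ * (ε / 2) * Q ≤ t * (ε / 2 * Q) := by
    have : θ₀ * (ε / 2 * Q) ≤ t * (ε / 2 * Q) :=
      mul_le_mul_of_nonneg_right hθ₀le (mul_nonneg (by linarith) hQ0)
    linarith [this]
  have : t * A + 2 * (t * B + s * D)
      ≤ (t * ρ x + g x ^ 2 * c x ^ 2 / δ) * N ^ 2 - θ₀ * ε / 2 / 2 * Q := by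
    linarith [hLt, hcross, hQt]
  beta_reduce
  rw [← htdef]
  linarith [this]
end
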